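/- Let W ∈ ℝ^{n×n} be symmetric positive definite, X ⊆ ℝ^n a nonempty closed convex set, H̃ ∈ ℝ^{n×n}, f̃ ∈ ℝ^n, F̃(u) = H̃u + f̃, M ∈ ℝ^{m×n}, Q ∈ ℝ^{m×m}, and suppose μ̃ > 0 and L̃ > 0 satisfy μ̃‖d‖_W² ≤ dᵀH̃d and ‖W^{-1}H̃d‖_W ≤ L̃‖d‖_W for all d ∈ ℝ^n, and α ∈ (0, 2μ̃/L̃²). Let ū ∈ X satisfy ⟨F̃(ū), v − ū⟩ ≥ 0 for all v ∈ X, let d_k ∈ ℝ^m, and let u_{k+1} be the W-weighted projection onto X of u_k − αW^{-1}(F̃(u_k) + MᵀQ d_k). Then ‖u_{k+1} − ū‖_W ≤ η‖u_k − ū‖_W + α‖W^{-1/2}MᵀQ‖ ‖d_k‖, where η = √(1 − 2αμ̃ + α²L̃²) and ‖W^{-1/2}MᵀQ‖ is the operator 2-norm. -/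

import Mathlib

open Matrix Finset

/-- Weighted inner product ⟨x,y⟩_W = xᵀWy. -/
noncomputable def wip {n : ℕ} (W : Matrix (Fin n) (Fin n) ℝ) (x y : Fin n → ℝ) : ℝ :=
  x ⬝ᵥ W.mulVec y

/-- Weighted norm ‖x‖_W = √(xᵀWx). -/
noncomputable def wnorm {n : ℕ} (W : Matrix (Fin n) (Fin n) ℝ) (x : Fin n → ℝ) : ℝ :=
  Real.sqrt (x ⬝ᵥ W.mulVec x)

/-- Euclidean norm ‖x‖ = √(xᵀx). -/
noncomputable def enorm' {n : ℕ} (x : Fin n → ℝ) : ℝ := Real.sqrt (x ⬝ᵥ x)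

/-- Operator 2-norm of a matrix. -/
noncomputable def opNorm {m n : ℕ} (A : Matrix (Fin m) (Fin n) ℝ) : ℝ :=
  ‖LinearMap.toContinuousLinearMap (Matrix.toEuclideanLin A)‖

section aux
variable {n m : ℕ}

lemma iss_dot_self_nonneg (x : Fin n → ℝ) : 0 ≤ x ⬝ᵥ x :=
  Finset.sum_nonneg fun i _ => mul_self_nonneg _

lemma iss_enorm_nonneg (x : Fin n → ℝ) : 0 ≤ enorm' x := Real.sqrt_nonneg _

lemma iss_sq_enorm (x : Fin n → ℝ) : enorm' x ^ 2 = x ⬝ᵥ x :=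
  Real.sq_sqrt (iss_dot_self_nonneg x)

lemma iss_norm_toE (x : Fin n → ℝ) :
    ‖(WithLp.equiv 2 (Fin n → ℝ)).symm x‖ = enorm' x := by
  rw [EuclideanSpace.norm_eq]
  congr 1; simp [enorm', dotProduct]; congr 1; ext i; ring

lemma iss_inner_toE (x y : Fin n → ℝ) :
    inner ℝ ((WithLp.equiv 2 (Fin n → ℝ)).symm x) ((WithLp.equiv 2 (Fin n → ℝ)).symm y)
      = x ⬝ᵥ y := by
  simp [PiLp.inner_apply, dotProduct, mul_comm]

/-- Cauchy–Schwarz for the dot product. -/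
lemma iss_cs (x y : Fin n → ℝ) : x ⬝ᵥ y ≤ enorm' x * enorm' y := by
  have := real_inner_le_norm ((WithLp.equiv 2 (Fin n → ℝ)).symm x)
    ((WithLp.equiv 2 (Fin n → ℝ)).symm y)
  rwa [iss_inner_toE, iss_norm_toE, iss_norm_toE] at this

lemma iss_enorm_neg (x : Fin n → ℝ) : enorm' (-x) = enorm' x := by
  simp [enorm']

lemma iss_enorm_smul (a : ℝ) (ha : 0 ≤ a) (x : Fin n → ℝ) :
    enorm' (a • x) = a * enorm' x := by
  unfold enorm'
  rw [smul_dotProduct, dotProduct_smul, smul_eq_mul, smul_eq_mul, ← mul_assoc,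
    ← sq, Real.sqrt_mul (sq_nonneg a), Real.sqrt_sq ha]

lemma iss_enorm_mulVec (A : Matrix (Fin m) (Fin n) ℝ) (x : Fin n → ℝ) :
    enorm' (A.mulVec x) ≤ opNorm A * enorm' x := by
  have h := (LinearMap.toContinuousLinearMap (Matrix.toEuclideanLin A)).le_opNorm
      ((WithLp.equiv 2 (Fin n → ℝ)).symm x)
  have he : (LinearMap.toContinuousLinearMap (Matrix.toEuclideanLin A))
      ((WithLp.equiv 2 (Fin n → ℝ)).symm x)
      = (WithLp.equiv 2 (Fin m → ℝ)).symm (A.mulVec x) := by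
    simp [Matrix.toEuclideanLin]
  rw [he, iss_norm_toE, iss_norm_toE] at h
  exact h

/-- Symmetric factorization of the weighted inner product. -/
lemma iss_dot_factor (W S : Matrix (Fin n) (Fin n) ℝ) (hSt : Sᵀ = S) (hSsq : S * S = W)
    (x y : Fin n → ℝ) : x ⬝ᵥ W.mulVec y = (S.mulVec x) ⬝ᵥ (S.mulVec y) := by
  rw [← hSsq, ← Matrix.mulVec_mulVec, Matrix.dotProduct_mulVec, ← hSt,
    Matrix.vecMul_transpose, hSt]

lemma iss_wnorm_factor (W S : Matrix (Fin n) (Fin n) ℝ) (hSt : Sᵀ = S) (hSsq : S * S = W)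
    (x : Fin n → ℝ) : wnorm W x = enorm' (S.mulVec x) := by
  unfold wnorm enorm'
  rw [iss_dot_factor W S hSt hSsq]

end aux

/-- one step of the noisy forward-backward splitting iteration contracts
towards the fixed point ū up to a disturbance term:
‖u_{k+1} − ū‖_W ≤ η‖u_k − ū‖_W + α‖W^{-1/2}MᵀQ‖‖d_k‖ with η = √(1 − 2αμ̃ + α²L̃²).
Here S is the unique symmetric positive definite square root of W, so W^{-1/2} = S⁻¹. -/
theorem one_step_iss {n m : ℕ}
    (W : Matrix (Fin n) (Fin n) ℝ) (hW : W.PosDef)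
    (S : Matrix (Fin n) (Fin n) ℝ) (hS : S.PosDef) (hSsq : S * S = W)
    (X : Set (Fin n → ℝ)) (hXne : X.Nonempty) (hXcl : IsClosed X) (hXconv : Convex ℝ X)
    (Ht : Matrix (Fin n) (Fin n) ℝ) (ft : Fin n → ℝ)
    (M : Matrix (Fin m) (Fin n) ℝ) (Q : Matrix (Fin m) (Fin m) ℝ)
    (μt Lt : ℝ) (hμ : 0 < μt) (hL : 0 < Lt)
    (hmono : ∀ d : Fin n → ℝ, μt * (wnorm W d) ^ 2 ≤ d ⬝ᵥ Ht.mulVec d)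
    (hlip : ∀ d : Fin n → ℝ, wnorm W (W⁻¹.mulVec (Ht.mulVec d)) ≤ Lt * wnorm W d)
    (α : ℝ) (hα : α ∈ Set.Ioo 0 (2 * μt / Lt ^ 2))
    (ubar : Fin n → ℝ) (hubar : ubar ∈ X)
    (hVI : ∀ v ∈ X, 0 ≤ (Ht.mulVec ubar + ft) ⬝ᵥ (v - ubar))
    (dk : Fin m → ℝ) (uk uk1 : Fin n → ℝ) (huk1 : uk1 ∈ X)
    (hproj : ∀ v ∈ X,
      wnorm W (uk1 - (uk - α • W⁻¹.mulVec ((Ht.mulVec uk + ft) + (Mᵀ * Q).mulVec dk)))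
        ≤ wnorm W (v - (uk - α • W⁻¹.mulVec ((Ht.mulVec uk + ft) + (Mᵀ * Q).mulVec dk)))) :
    wnorm W (uk1 - ubar)
      ≤ Real.sqrt (1 - 2 * α * μt + α ^ 2 * Lt ^ 2) * wnorm W (uk - ubar)
        + α * opNorm (S⁻¹ * (Mᵀ * Q)) * enorm' dk := by
  obtain ⟨hα0, hα2⟩ := hα
  -- basic symmetry / invertibility facts
  have hSt : Sᵀ = S := by simpa [Matrix.IsHermitian, conjTranspose_eq_transpose_of_trivial] using hS.1
  have hWt : Wᵀ = W := by simpa [Matrix.IsHermitian, conjTranspose_eq_transpose_of_trivial] using hW.1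
  have hSdet : IsUnit S.det := isUnit_iff_ne_zero.mpr (ne_of_gt hS.det_pos)
  have hWdet : IsUnit W.det := isUnit_iff_ne_zero.mpr (ne_of_gt hW.det_pos)
  have hWWinv : W * W⁻¹ = 1 := Matrix.mul_nonsing_inv W hWdet
  have hSWinv : S * W⁻¹ = S⁻¹ := by
    rw [← hSsq, Matrix.mul_inv_rev, ← Matrix.mul_assoc, Matrix.mul_nonsing_inv S hSdet,
      Matrix.one_mul]
  have wf : ∀ x : Fin n → ℝ, wnorm W x = enorm' (S.mulVec x) :=
    iss_wnorm_factor W S hSt hSsq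
  have df : ∀ x y : Fin n → ℝ, x ⬝ᵥ W.mulVec y = (S.mulVec x) ⬝ᵥ (S.mulVec y) :=
    iss_dot_factor W S hSt hSsq
  have hSWi : ∀ g : Fin n → ℝ, S.mulVec (W⁻¹.mulVec g) = S⁻¹.mulVec g := by
    intro g; rw [Matrix.mulVec_mulVec, hSWinv]
  have hpair : ∀ g h : Fin n → ℝ, (S⁻¹.mulVec g) ⬝ᵥ (S.mulVec h) = g ⬝ᵥ h := by
    intro g h
    rw [← hSWi, ← df, Matrix.dotProduct_mulVec, ← Matrix.mulVec_transpose, hWt,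
      Matrix.mulVec_mulVec, hWWinv, Matrix.one_mulVec]
  set z : Fin n → ℝ :=
    uk - α • W⁻¹.mulVec ((Ht.mulVec uk + ft) + (Mᵀ * Q).mulVec dk) with hz
  set p : Fin n → ℝ := S.mulVec (uk1 - ubar) with hp
  set e : Fin n → ℝ := uk - ubar with he
  set Fb : Fin n → ℝ := Ht.mulVec ubar + ft with hFb
  -- Step A: variational characterization of the projection
  have stepA : ∀ v ∈ X, 0 ≤ (S.mulVec (uk1 - z)) ⬝ᵥ (S.mulVec (v - uk1)) := by
    intro v hv
    set A := S.mulVec (uk1 - z) with hA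
    set wv := S.mulVec (v - uk1) with hwv
    have key : ∀ t : ℝ, 0 < t → t ≤ 1 → 0 ≤ 2 * t * (A ⬝ᵥ wv) + t ^ 2 * (wv ⬝ᵥ wv) := by
      intro t ht0 ht1
      have hvt : uk1 + t • (v - uk1) ∈ X := by
        have := hXconv huk1 hv (by linarith : (0:ℝ) ≤ 1 - t) (le_of_lt ht0) (by ring)
        convert this using 1
        module
      have h1 := hproj _ hvt
      rw [wf, wf] at h1
      have hSexp : S.mulVec ((uk1 + t • (v - uk1)) - z) = A + t • wv := by
        have hexp : ((uk1 + t • (v - uk1)) - z) = (uk1 - z) + t • (v - uk1) := by module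
        rw [hexp, Matrix.mulVec_add, Matrix.mulVec_smul]
      rw [hSexp] at h1
      have h2 : A ⬝ᵥ A ≤ (A + t • wv) ⬝ᵥ (A + t • wv) := by
        have h3 := pow_le_pow_left₀ (iss_enorm_nonneg _) h1 2
        rwa [iss_sq_enorm, iss_sq_enorm] at h3
      have hcomm : wv ⬝ᵥ A = A ⬝ᵥ wv := dotProduct_comm wv A
      simp only [dotProduct_add, add_dotProduct, dotProduct_smul,
        smul_dotProduct, smul_eq_mul] at h2
      nlinarith [h2, hcomm]
    by_contra hneg
    push_neg at hneg
    have hc : 0 ≤ wv ⬝ᵥ wv := iss_dot_self_nonneg wv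
    rcases eq_or_lt_of_le hc with hc0 | hcpos
    · have := key 1 one_pos le_rfl
      nlinarith [this, hc0]
    · set t : ℝ := min 1 ((-(A ⬝ᵥ wv)) / (wv ⬝ᵥ wv)) with ht
      have ht0 : 0 < t :=
        lt_min one_pos (div_pos (by linarith) hcpos)
      have ht1 : t ≤ 1 := min_le_left _ _
      have htr : t ≤ (-(A ⬝ᵥ wv)) / (wv ⬝ᵥ wv) := min_le_right _ _
      have htc : t * (wv ⬝ᵥ wv) ≤ -(A ⬝ᵥ wv) := (le_div_iff₀ hcpos).mp htr
      have := key t ht0 ht1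
      nlinarith [this, htc, mul_pos ht0 (neg_pos.mpr hneg)]
  -- decomposition of S(z - ubar)
  have hdecomp : S.mulVec (z - ubar) =
      (S.mulVec e - α • S.mulVec (W⁻¹.mulVec (Ht.mulVec e)))
      - α • (S⁻¹.mulVec Fb) - α • (S⁻¹.mulVec ((Mᵀ * Q).mulVec dk)) := by
    have h4 : z - ubar = e - α • (W⁻¹.mulVec (Ht.mulVec e)) - α • (W⁻¹.mulVec Fb)
        - α • (W⁻¹.mulVec ((Mᵀ * Q).mulVec dk)) := by
      have h5 : Ht.mulVec e = Ht.mulVec uk - Ht.mulVec ubar := Matrix.mulVec_sub Ht uk ubar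
      rw [hz, he, hFb]
      simp only [h5, Matrix.mulVec_add, Matrix.mulVec_sub]
      module
    rw [h4]
    simp only [Matrix.mulVec_sub, Matrix.mulVec_smul, hSWi]
  -- the contraction inequality for p
  have hA1 := stepA ubar hubar
  have hAexp : S.mulVec (uk1 - z) = p - S.mulVec (z - ubar) := by
    rw [hp, ← Matrix.mulVec_sub]
    exact congrArg _ (by module)
  have hAexp2 : S.mulVec (ubar - uk1) = -p := by
    rw [hp, ← Matrix.mulVec_neg]
    exact congrArg _ (by module)
  set r : Fin n → ℝ := S.mulVec e - α • S.mulVec (W⁻¹.mulVec (Ht.mulVec e)) with hr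
  set sv : Fin n → ℝ := α • (S⁻¹.mulVec ((Mᵀ * Q).mulVec dk)) with hsv
  -- p⬝p ≤ (r - sv)⬝p + (nonpositive VI term)
  have hVIterm : 0 ≤ (α • (S⁻¹.mulVec Fb)) ⬝ᵥ p := by
    rw [smul_dotProduct, smul_eq_mul, hp, hpair]
    exact mul_nonneg (le_of_lt hα0) (hVI uk1 huk1)
  have hmain : p ⬝ᵥ p ≤ (r ⬝ᵥ p) + ((-sv) ⬝ᵥ p) := by
    rw [hAexp, hdecomp] at hA1
    rw [hAexp2] at hA1
    simp only [sub_dotProduct, dotProduct_neg, neg_dotProduct,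
      ← hr, ← hsv] at hA1 ⊢
    linarith [hVIterm]
  -- norm bound on r
  have hSee : 0 ≤ (S.mulVec e) ⬝ᵥ (S.mulVec e) := iss_dot_self_nonneg _
  have hXe : (S.mulVec e) ⬝ᵥ (S.mulVec (W⁻¹.mulVec (Ht.mulVec e))) = e ⬝ᵥ (Ht.mulVec e) := by
    rw [hSWi, dotProduct_comm, hpair, dotProduct_comm]
  have hmonoe : μt * ((S.mulVec e) ⬝ᵥ (S.mulVec e)) ≤ e ⬝ᵥ (Ht.mulVec e) := by
    have := hmono e
    rwa [wf, iss_sq_enorm] at this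
  have hlipe : (S.mulVec (W⁻¹.mulVec (Ht.mulVec e))) ⬝ᵥ (S.mulVec (W⁻¹.mulVec (Ht.mulVec e)))
      ≤ Lt ^ 2 * ((S.mulVec e) ⬝ᵥ (S.mulVec e)) := by
    have h6 := hlip e
    rw [wf, wf] at h6
    have h7 := pow_le_pow_left₀ (iss_enorm_nonneg _) h6 2
    rw [iss_sq_enorm, mul_pow, iss_sq_enorm] at h7
    linarith [h7]
  have hrr : r ⬝ᵥ r ≤ (1 - 2 * α * μt + α ^ 2 * Lt ^ 2) * ((S.mulVec e) ⬝ᵥ (S.mulVec e)) := by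
    have hcomm2 : (S.mulVec (W⁻¹.mulVec (Ht.mulVec e))) ⬝ᵥ (S.mulVec e)
        = (S.mulVec e) ⬝ᵥ (S.mulVec (W⁻¹.mulVec (Ht.mulVec e))) := dotProduct_comm _ _
    have hrr0 : r ⬝ᵥ r = (S.mulVec e) ⬝ᵥ (S.mulVec e) - 2 * α * (e ⬝ᵥ (Ht.mulVec e))
        + α ^ 2 * ((S.mulVec (W⁻¹.mulVec (Ht.mulVec e))) ⬝ᵥ (S.mulVec (W⁻¹.mulVec (Ht.mulVec e)))) := by
      rw [hr]
      simp only [sub_dotProduct, dotProduct_sub, smul_dotProduct,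
        dotProduct_smul, smul_eq_mul]
      rw [hcomm2, hXe]
      ring
    rw [hrr0]
    set A0 : ℝ := (S.mulVec e) ⬝ᵥ (S.mulVec e) with hA0
    set Y0 : ℝ := e ⬝ᵥ (Ht.mulVec e) with hY0
    set Z0 : ℝ := (S.mulVec (W⁻¹.mulVec (Ht.mulVec e))) ⬝ᵥ (S.mulVec (W⁻¹.mulVec (Ht.mulVec e))) with hZ0
    have t1 : α * (μt * ((S.mulVec e) ⬝ᵥ (S.mulVec e))) ≤ α * (e ⬝ᵥ (Ht.mulVec e)) :=
      mul_le_mul_of_nonneg_left hmonoe (le_of_lt hα0)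
    have t2 : α ^ 2 * ((S.mulVec (W⁻¹.mulVec (Ht.mulVec e))) ⬝ᵥ (S.mulVec (W⁻¹.mulVec (Ht.mulVec e))))
        ≤ α ^ 2 * (Lt ^ 2 * ((S.mulVec e) ⬝ᵥ (S.mulVec e))) :=
      mul_le_mul_of_nonneg_left hlipe (sq_nonneg α)
    nlinarith [t1, t2]

  have hrbound : enorm' r ≤ Real.sqrt (1 - 2 * α * μt + α ^ 2 * Lt ^ 2) * enorm' (S.mulVec e) := by
    have := Real.sqrt_le_sqrt hrr
    rwa [Real.sqrt_mul' _ hSee] at this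
  -- norm bound on sv
  have hsbound : enorm' sv ≤ α * opNorm (S⁻¹ * (Mᵀ * Q)) * enorm' dk := by
    rw [hsv, iss_enorm_smul α (le_of_lt hα0), Matrix.mulVec_mulVec, mul_assoc]
    exact mul_le_mul_of_nonneg_left (iss_enorm_mulVec _ dk) (le_of_lt hα0)
  -- assemble
  have hgoal_eq : wnorm W (uk1 - ubar) = enorm' p := by rw [wf, hp]
  have hgoal_eq2 : wnorm W (uk - ubar) = enorm' (S.mulVec e) := by rw [wf, he]
  rw [hgoal_eq, hgoal_eq2]
  have hpn : 0 ≤ enorm' p := iss_enorm_nonneg p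
  rcases eq_or_lt_of_le hpn with hp0 | hppos
  · rw [← hp0]
    have h8 : 0 ≤ Real.sqrt (1 - 2 * α * μt + α ^ 2 * Lt ^ 2) * enorm' (S.mulVec e) :=
      mul_nonneg (Real.sqrt_nonneg _) (iss_enorm_nonneg _)
    have h9 : 0 ≤ α * opNorm (S⁻¹ * (Mᵀ * Q)) * enorm' dk :=
      mul_nonneg (mul_nonneg (le_of_lt hα0) (norm_nonneg _)) (iss_enorm_nonneg _)
    linarith
  · have hcs1 : r ⬝ᵥ p ≤ enorm' r * enorm' p := iss_cs r p
    have hcs2 : (-sv) ⬝ᵥ p ≤ enorm' sv * enorm' p := by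
      have := iss_cs (-sv) p
      rwa [iss_enorm_neg] at this
    have hpp : p ⬝ᵥ p = enorm' p ^ 2 := (iss_sq_enorm p).symm
    have h10 : enorm' p ≤ enorm' r + enorm' sv := by
      have h12 : p ⬝ᵥ p = enorm' p * enorm' p := by rw [← iss_sq_enorm]; ring
      have h11 : enorm' p * enorm' p ≤ (enorm' r + enorm' sv) * enorm' p := by
        rw [add_mul]
        linarith only [hmain, hcs1, hcs2, h12.ge, h12.le]
      exact le_of_mul_le_mul_right h11 hppos
    calc enorm' p ≤ enorm' r + enorm' sv := h10
      _ ≤ Real.sqrt (1 - 2 * α * μt + α ^ 2 * Lt ^ 2) * enorm' (S.mulVec e)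
          + α * opNorm (S⁻¹ * (Mᵀ * Q)) * enorm' dk := add_le_add hrbound hsbound
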